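/- For any integers n ≥ k ≥ 0 and any subset S ⊆ {1, ..., k}, the map φ_S is a bijection from the set A_k onto the set x^k_{S,n}. -/

import Mathlib

/-- Vertices of the spider `S(2ⁿ)`: a center `v₀` together with legs `vᵢ` and
leg-tips `v'ᵢ` for `1 ≤ i ≤ n`. -/
inductive SpiderV (n : ℕ) : Type
  | center : SpiderV n
  | leg : Fin n → SpiderV n
  | tip : Fin n → SpiderV n
  deriving DecidableEq, Fintype

/-- The set of indices `i` with `α(vᵢ) = 1` and `α(v'ᵢ) = 0`. -/
def suppA (n : ℕ) (α : SpiderV n → ℕ) : Finset (Fin n) :=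
  Finset.univ.filter fun i => α (.leg i) = 1 ∧ α (.tip i) = 0

/-- `α ∈ 𝒜_k`: maps `α : V(S(2ⁿ)) → ℕ` with `α(v₀) = 1`, `α(vᵢ) ≤ 1` and
`α(vᵢ) + α(v'ᵢ) ≤ 2` for all `i`, and `#{i : α(vᵢ) = 1, α(v'ᵢ) = 0} = k`. -/
def memA (n k : ℕ) (α : SpiderV n → ℕ) : Prop :=
  α .center = 1 ∧ (∀ i : Fin n, α (.leg i) ≤ 1 ∧ α (.leg i) + α (.tip i) ≤ 2) ∧
    (suppA n α).card = k

/-- The map `φ_S`: writing `{i : α(vᵢ) = 1, α(v'ᵢ) = 0} = {i₁ < i₂ < ⋯ < i_k}`,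
`φ_S(α)` sends `v_{i_j} ↦ 2` for `j ∈ S` (positions are 1-indexed), `v₀ ↦ 0`, and
agrees with `α` on all other vertices. -/
def phi (n : ℕ) (S : Finset ℕ) (α : SpiderV n → ℕ) : SpiderV n → ℕ :=
  fun v =>
    match v with
    | .center => 0
    | .leg i =>
        if i ∈ suppA n α ∧ ((suppA n α).sort (· ≤ ·)).idxOf i + 1 ∈ S then 2
        else α (.leg i)
    | .tip i => α (.tip i)

/-- The set of indices `i` with `α(vᵢ) ≥ 1` and `α(v'ᵢ) = 0`. -/
def suppX (n : ℕ) (α : SpiderV n → ℕ) : Finset (Fin n) :=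
  Finset.univ.filter fun i => 1 ≤ α (.leg i) ∧ α (.tip i) = 0

/-- `α ∈ x^t_{S,n}`: maps `α : V(S(2ⁿ)) → ℕ` with `α(v₀) = 0`,
`α(vᵢ) + α(v'ᵢ) ≤ 2` for all `i`, such that `T = {i : α(vᵢ) ≥ 1, α(v'ᵢ) = 0}` has
exactly `t` elements, and writing `T = {k₁ < ⋯ < k_t}` one has `α(v_{k_j}) = 2` if
`j ∈ S` and `α(v_{k_j}) = 1` otherwise (positions `j` are 1-indexed). -/
def memX (n : ℕ) (S : Finset ℕ) (t : ℕ) (α : SpiderV n → ℕ) : Prop :=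
  α .center = 0 ∧ (∀ i : Fin n, α (.leg i) + α (.tip i) ≤ 2) ∧
    (suppX n α).card = t ∧
    ∀ i ∈ suppX n α,
      α (.leg i) = if ((suppX n α).sort (· ≤ ·)).idxOf i + 1 ∈ S then 2 else 1


lemma mem_suppA0 {n : ℕ} {α : SpiderV n → ℕ} {i : Fin n} :
    i ∈ suppA n α ↔ α (.leg i) = 1 ∧ α (.tip i) = 0 := by
  simp [suppA]

lemma mem_suppX0 {n : ℕ} {α : SpiderV n → ℕ} {i : Fin n} :
    i ∈ suppX n α ↔ 1 ≤ α (.leg i) ∧ α (.tip i) = 0 := by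
  simp [suppX]

lemma suppX_phi {n : ℕ} {S : Finset ℕ} {α : SpiderV n → ℕ}
    (h : ∀ i : Fin n, α (.leg i) ≤ 1) :
    suppX n (phi n S α) = suppA n α := by
  ext i
  rw [mem_suppX0, mem_suppA0]
  show (1 ≤ if i ∈ suppA n α ∧ ((suppA n α).sort (· ≤ ·)).idxOf i + 1 ∈ S then 2
    else α (.leg i)) ∧ α (.tip i) = 0 ↔ _
  by_cases hi : i ∈ suppA n α ∧ ((suppA n α).sort (· ≤ ·)).idxOf i + 1 ∈ S
  · rw [if_pos hi]
    have h1 := mem_suppA0.mp hi.1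
    constructor
    · intro _; exact h1
    · intro _; exact ⟨by omega, h1.2⟩
  · rw [if_neg hi]
    have hl := h i
    constructor
    · rintro ⟨h1, h2⟩; exact ⟨by omega, h2⟩
    · rintro ⟨h1, h2⟩; exact ⟨by omega, h2⟩

lemma mem_suppA {n : ℕ} {α : SpiderV n → ℕ} {i : Fin n} :
    i ∈ suppA n α ↔ α (.leg i) = 1 ∧ α (.tip i) = 0 := by
  simp [suppA]

lemma mem_suppX {n : ℕ} {α : SpiderV n → ℕ} {i : Fin n} :
    i ∈ suppX n α ↔ 1 ≤ α (.leg i) ∧ α (.tip i) = 0 := by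
  simp [suppX]

/-- For `n ≥ k ≥ 0` and `S ⊆ {1, …, k}`, the map `φ_S` is a bijection from `𝒜_k`
onto `x^k_{S,n}`. -/
theorem phi_bijOn (n k : ℕ) (hkn : k ≤ n) (S : Finset ℕ) (hS : S ⊆ Finset.Icc 1 k) :
    Set.BijOn (phi n S) {α | memA n k α} {α | memX n S k α} := by
  constructor
  · -- MapsTo
    intro α hα
    obtain ⟨hc, hle, hcard⟩ := hα
    have hs : suppX n (phi n S α) = suppA n α := suppX_phi (fun i => (hle i).1)
    refine ⟨rfl, ?_, ?_, ?_⟩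
    · intro i
      show (if i ∈ suppA n α ∧ ((suppA n α).sort (· ≤ ·)).idxOf i + 1 ∈ S then 2
        else α (.leg i)) + α (.tip i) ≤ 2
      split
      · next h =>
          have := mem_suppA.mp h.1
          omega
      · exact (hle i).2
    · rw [hs]; exact hcard
    · intro i hi
      rw [hs] at hi
      have h1 := mem_suppA.mp hi
      show (if i ∈ suppA n α ∧ ((suppA n α).sort (· ≤ ·)).idxOf i + 1 ∈ S then 2
        else α (.leg i)) = _
      rw [hs]
      by_cases hp : ((suppA n α).sort (· ≤ ·)).idxOf i + 1 ∈ S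
      · rw [if_pos ⟨hi, hp⟩, if_pos hp]
      · rw [if_neg (by tauto), if_neg hp, h1.1]
  constructor
  · -- InjOn
    intro α hα β hβ hid
    obtain ⟨hcα, hleα, hcardα⟩ := hα
    obtain ⟨hcβ, hleβ, hcardβ⟩ := hβ
    have hsupp : suppA n α = suppA n β := by
      rw [← suppX_phi (S := S) (fun i => (hleα i).1),
        ← suppX_phi (S := S) (fun i => (hleβ i).1), hid]
    funext v
    cases v with
    | center => rw [hcα, hcβ]
    | tip i => exact congrFun hid (.tip i)
    | leg i =>
      by_cases hi : i ∈ suppA n α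
      · have h1 := mem_suppA.mp hi
        have h2 := mem_suppA.mp (hsupp ▸ hi)
        rw [h1.1, h2.1]
      · have := congrFun hid (.leg i)
        simp only [phi] at this
        rwa [if_neg (by tauto), if_neg (by rw [← hsupp]; tauto)] at this
  · -- SurjOn
    intro β hβ
    obtain ⟨hcβ, hleβ, hcardβ, hvalβ⟩ := hβ
    set α : SpiderV n → ℕ := fun v =>
      match v with
      | .center => 1
      | .leg i => if i ∈ suppX n β then 1 else β (.leg i)
      | .tip i => β (.tip i) with hαdef
    have hlegle : ∀ i : Fin n, α (.leg i) ≤ 1 := by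
      intro i
      show (if i ∈ suppX n β then 1 else β (.leg i)) ≤ 1
      split
      · exact le_refl 1
      · next h =>
          rw [mem_suppX] at h
          have := hleβ i
          omega
    have hsupp : suppA n α = suppX n β := by
      ext i
      rw [mem_suppA, mem_suppX]
      show (if i ∈ suppX n β then 1 else β (.leg i)) = 1 ∧ β (.tip i) = 0 ↔ _
      by_cases hi : i ∈ suppX n β
      · have := mem_suppX.mp hi
        rw [if_pos hi]
        omega
      · rw [if_neg hi, mem_suppX] at *
        omega
    have hsum : ∀ i : Fin n, α (.leg i) + α (.tip i) ≤ 2 := by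
      intro i
      show (if i ∈ suppX n β then 1 else β (.leg i)) + β (.tip i) ≤ 2
      split
      · next h => rw [(mem_suppX.mp h).2]; omega
      · exact hleβ i
    refine ⟨α, ⟨rfl, fun i => ⟨hlegle i, hsum i⟩, by rw [hsupp]; exact hcardβ⟩, ?_⟩
    · funext v
      cases v with
      | center => exact hcβ.symm
      | tip i => rfl
      | leg i =>
        show (if i ∈ suppA n α ∧ ((suppA n α).sort (· ≤ ·)).idxOf i + 1 ∈ S then 2
          else α (.leg i)) = β (.leg i)
        rw [hsupp]
        by_cases hi : i ∈ suppX n β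
        · rw [hvalβ i hi]
          by_cases hp : ((suppX n β).sort (· ≤ ·)).idxOf i + 1 ∈ S
          · rw [if_pos ⟨hi, hp⟩, if_pos hp]
          · rw [if_neg (by tauto), if_neg hp]
            show (if i ∈ suppX n β then 1 else β (.leg i)) = 1
            rw [if_pos hi]
        · rw [if_neg (by tauto)]
          show (if i ∈ suppX n β then 1 else β (.leg i)) = β (.leg i)
          rw [if_neg hi]
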